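/- Let λ, μ, λ̃ be real numbers with μ > 0 and λ + μ > 0, and assume (λ − μ)(λ + 2μ)/(λ + 3μ) < λ̃ < λ + 2μ. Set b = (λ − λ̃)(λ + 3μ) + 2μ². Then the real symmetric 3×3 matrix [[μ(λ + 3μ), 0, 0],[0, 2μ(λ + 2μ), −b],[0, −b, 2μ(λ + 2μ)]] is positive definite. -/

import Mathlib

/-- Under the paper's assumption (2.7), with `b = (λ−λ̃)(λ+3μ)+2μ²`, the real symmetric
matrix `[[μ(λ+3μ), 0, 0],[0, 2μ(λ+2μ), −b],[0, −b, 2μ(λ+2μ)]]` is positive definite. -/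
theorem stmt_7 (lam mu lamt : ℝ) (hmu : 0 < mu) (hlm : 0 < lam + mu)
    (h1 : (lam - mu) * (lam + 2 * mu) / (lam + 3 * mu) < lamt)
    (h2 : lamt < lam + 2 * mu)
    (b : ℝ) (hb : b = (lam - lamt) * (lam + 3 * mu) + 2 * mu ^ 2) :
    (!![mu * (lam + 3 * mu), 0, 0;
        0, 2 * mu * (lam + 2 * mu), -b;
        0, -b, 2 * mu * (lam + 2 * mu)] : Matrix (Fin 3) (Fin 3) ℝ).PosDef := by
  have h3 : 0 < lam + 3 * mu := by linarith
  have h1' : (lam - mu) * (lam + 2 * mu) < lamt * (lam + 3 * mu) :=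
    (div_lt_iff₀ h3).mp h1
  have ha : 0 < mu * (lam + 3 * mu) := mul_pos hmu h3
  have hdb1 : 0 < 2 * mu * (lam + 2 * mu) - b := by nlinarith
  have hdb2 : 0 < 2 * mu * (lam + 2 * mu) + b := by nlinarith
  rw [Matrix.posDef_iff_dotProduct_mulVec]
  constructor
  · ext i j
    fin_cases i <;> fin_cases j <;> simp [Matrix.conjTranspose, Matrix.transpose, Matrix.vecHead, Matrix.vecTail]
  · intro x hx
    have hexp : dotProduct (star x) ((!![mu * (lam + 3 * mu), 0, 0;
        0, 2 * mu * (lam + 2 * mu), -b;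
        0, -b, 2 * mu * (lam + 2 * mu)] : Matrix (Fin 3) (Fin 3) ℝ).mulVec x)
        = mu * (lam + 3 * mu) * (x 0)^2
          + 2 * mu * (lam + 2 * mu) * ((x 1)^2 + (x 2)^2) - 2 * b * (x 1 * x 2) := by
      simp [dotProduct, Matrix.mulVec, Fin.sum_univ_three, Matrix.vecHead, Matrix.vecTail]
      ring
    rw [hexp]
    have key : mu * (lam + 3 * mu) * (x 0)^2
          + 2 * mu * (lam + 2 * mu) * ((x 1)^2 + (x 2)^2) - 2 * b * (x 1 * x 2)
        = mu * (lam + 3 * mu) * (x 0)^2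
          + (2 * mu * (lam + 2 * mu) - b)/2 * (x 1 + x 2)^2
          + (2 * mu * (lam + 2 * mu) + b)/2 * (x 1 - x 2)^2 := by ring
    rw [key]
    by_contra hcon
    push_neg at hcon
    have t0 : mu * (lam + 3 * mu) * (x 0)^2 ≤ 0 := by
      nlinarith [sq_nonneg (x 1 + x 2), sq_nonneg (x 1 - x 2)]
    have t1 : (2 * mu * (lam + 2 * mu) - b)/2 * (x 1 + x 2)^2 ≤ 0 := by
      nlinarith [sq_nonneg (x 0), sq_nonneg (x 1 - x 2)]
    have t2 : (2 * mu * (lam + 2 * mu) + b)/2 * (x 1 - x 2)^2 ≤ 0 := by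
      nlinarith [sq_nonneg (x 0), sq_nonneg (x 1 + x 2)]
    have e0 : x 0 = 0 := by
      have : (x 0)^2 ≤ 0 := by
        rcases (mul_nonpos_iff.mp t0) with ⟨_, h⟩ | ⟨h, _⟩
        · exact h
        · linarith
      exact pow_eq_zero_iff (two_ne_zero) |>.mp (le_antisymm this (sq_nonneg (x 0)))
    have e1 : x 1 + x 2 = 0 := by
      have : (x 1 + x 2)^2 ≤ 0 := by
        rcases (mul_nonpos_iff.mp t1) with ⟨_, h⟩ | ⟨h, _⟩
        · exact h
        · linarith
      exact pow_eq_zero_iff (two_ne_zero) |>.mp (le_antisymm this (sq_nonneg (x 1 + x 2)))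
    have e2 : x 1 - x 2 = 0 := by
      have : (x 1 - x 2)^2 ≤ 0 := by
        rcases (mul_nonpos_iff.mp t2) with ⟨_, h⟩ | ⟨h, _⟩
        · exact h
        · linarith
      exact pow_eq_zero_iff (two_ne_zero) |>.mp (le_antisymm this (sq_nonneg (x 1 - x 2)))
    apply hx
    funext i
    fin_cases i
    · exact e0
    · show x 1 = 0; linarith
    · show x 2 = 0; linarith
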